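/- Integral Tong-type theorem: Let f : ℝ → ℝ be continuous on the closed interval [a,b] (with a < b). If B_f(a,b) = J_f(a,b), then there exists a point η ∈ (a,b) such that f(η) = (1/(η-a)) · ∫_a^η f(t) dt. -/

import Mathlib

open intervalIntegral in
/-- **Integral Tong-type theorem.** Let `f` be continuous on `[a,b]`. If
`B_f(a,b) = J_f(a,b)`, where `B_f(a,b) = ((b-a)/2)·I_f(a,b)`,
`J_f(a,b) = b·I_f(a,b) - (1/(b-a)) ∫_a^b t·f(t) dt` and
`I_f(a,b) = (1/(b-a)) ∫_a^b f(t) dt`, then there exists `η ∈ (a,b)` with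
`f(η) = (1/(η-a)) ∫_a^η f(t) dt`. -/
theorem integral_tong_theorem (f : ℝ → ℝ) (a b : ℝ) (hab : a < b)
    (hfc : ContinuousOn f (Set.Icc a b))
    (hmean : (b - a) / 2 * ((1 / (b - a)) * ∫ t in a..b, f t) =
        b * ((1 / (b - a)) * ∫ t in a..b, f t) - (1 / (b - a)) * ∫ t in a..b, t * f t) :
    ∃ η ∈ Set.Ioo a b, f η = (1 / (η - a)) * ∫ t in a..η, f t := by
  have hba : b - a ≠ 0 := sub_ne_zero.mpr hab.ne'
  -- continuous extension of f to ℝ by clamping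
  set g : ℝ → ℝ := fun t => f (max a (min t b)) with hgdef
  have hmem : ∀ t : ℝ, max a (min t b) ∈ Set.Icc a b := fun t =>
    ⟨le_max_left _ _, max_le hab.le (min_le_right _ _)⟩
  have hgc : Continuous g :=
    hfc.comp_continuous (by fun_prop) hmem
  have hgf : ∀ t ∈ Set.Icc a b, g t = f t := by
    intro t ht
    simp only [hgdef]
    rw [min_eq_left ht.2, max_eq_right ht.1]
  -- primitive
  set F : ℝ → ℝ := fun x => ∫ t in a..x, g t with hFdef
  have hFderiv : ∀ x : ℝ, HasDerivAt F (g x) x := fun x =>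
    intervalIntegral.integral_hasDerivAt_right (hgc.intervalIntegrable a x)
      (hgc.stronglyMeasurableAtFilter _ _) hgc.continuousAt
  have hFc : Continuous F := by
    have := fun x => (hFderiv x).continuousAt
    exact continuous_iff_continuousAt.mpr this
  -- integrals of f equal integrals of g on subintervals of [a,b]
  have hInt : ∀ x ∈ Set.Icc a b, (∫ t in a..x, f t) = F x := by
    intro x hx
    refine intervalIntegral.integral_congr fun t ht => ?_
    have : t ∈ Set.Icc a b := Set.uIcc_subset_Icc ⟨le_refl a, hab.le⟩ ⟨hx.1, hx.2⟩ ht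
    exact (hgf t this).symm
  have hIntf : (∫ t in a..b, f t) = F b := hInt b ⟨hab.le, le_refl b⟩
  have hInttf : (∫ t in a..b, t * f t) = ∫ t in a..b, t * g t := by
    refine intervalIntegral.integral_congr fun t ht => ?_
    have : t ∈ Set.Icc a b := by rwa [Set.uIcc_of_le hab.le] at ht
    rw [hgf t this]
  -- integration by parts: ∫ t·g t = b·F b - ∫ F
  have hibp : (∫ t in a..b, t * g t) = b * F b - ∫ t in a..b, F t := by
    have h := intervalIntegral.integral_mul_deriv_eq_deriv_mul
      (u := fun x : ℝ => x) (v := F) (u' := fun _ => (1 : ℝ)) (v' := g)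
      (fun x _ => hasDerivAt_id x) (fun x _ => hFderiv x)
      intervalIntegrable_const (hgc.intervalIntegrable a b)
    have hFa : F a = 0 := intervalIntegral.integral_same
    rw [hFa] at h
    simpa using h
  -- from hmean: ∫ F = ((b-a)/2) * F b
  have hkey : (∫ t in a..b, F t) = (b - a) / 2 * F b := by
    rw [hIntf, hInttf, hibp] at hmean
    field_simp at hmean
    have h2 : (b - a) * ((b - a) * F b - 2 * (∫ t in a..b, F t)) = 0 := by
      linear_combination (b - a) * hmean
    rcases mul_eq_zero.mp h2 with h | h
    · exact absurd h hba
    · linarith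
  -- Rolle for G x = ∫_a^x F - (x-a)/2 * F x
  set G : ℝ → ℝ := fun x => (∫ t in a..x, F t) - (x - a) / 2 * F x with hGdef
  have hGderiv : ∀ x : ℝ, HasDerivAt G ((F x - (x - a) * g x) / 2) x := by
    intro x
    have h1 : HasDerivAt (fun x => ∫ t in a..x, F t) (F x) x :=
      intervalIntegral.integral_hasDerivAt_right (hFc.intervalIntegrable a x)
        (hFc.stronglyMeasurableAtFilter _ _) hFc.continuousAt
    have h2 : HasDerivAt (fun x : ℝ => (x - a) / 2 * F x)
        ((1 : ℝ) / 2 * F x + (x - a) / 2 * g x) x := by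
      have := (((hasDerivAt_id x).sub_const a).div_const 2).fun_mul (hFderiv x)
      simpa using this
    have := h1.fun_sub h2
    rw [show (F x - (x - a) * g x) / 2 = F x - (1 / 2 * F x + (x - a) / 2 * g x) by ring]
    exact this
  have hGa : G a = 0 := by simp [hGdef]
  have hGb : G b = 0 := by simp [hGdef, hkey]
  obtain ⟨η, hη, hη0⟩ := exists_hasDerivAt_eq_zero hab
    (Continuous.continuousOn (by fun_prop)) (hGa.trans hGb.symm) (fun x _ => hGderiv x)
  refine ⟨η, hη, ?_⟩
  have hηa : η - a ≠ 0 := sub_ne_zero.mpr hη.1.ne'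
  have hFη : F η = (η - a) * g η := by
    have : F η - (η - a) * g η = 0 := by
      field_simp at hη0; linarith
    linarith
  have hgfη : g η = f η := hgf η ⟨hη.1.le, hη.2.le⟩
  rw [hInt η ⟨hη.1.le, hη.2.le⟩, hFη, hgfη]
  field_simp
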